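/- Let k ≥ 2 and n ≥ 2k+3 be integers. Then the number of cyclic binary strings of length n all of whose blocks have length at least k satisfies the linear recurrence a_k(n) = 2·a_k(n−1) − a_k(n−2) + a_k(n−2k). -/

import Mathlib

open SimpleGraph

/-- `N[S]`: the union of closed neighbourhoods of the vertices of `S`. -/
def closedNbhd {V : Type*} (G : SimpleGraph V) (S : Set V) : Set V :=
  ⋃ v ∈ S, insert v (G.neighborSet v)

/-- A set `S` is digitally convex in `G` if every vertex `v` with `N[v] ⊆ N[S]`
belongs to `S`. -/
def DigConvex {V : Type*} (G : SimpleGraph V) (S : Set V) : Prop :=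
  ∀ v : V, insert v (G.neighborSet v) ⊆ closedNbhd G S → v ∈ S

/-- `n_D(G)`: the number of digitally convex sets of `G`. -/
noncomputable def nD {V : Type*} (G : SimpleGraph V) : ℕ :=
  Nat.card {S : Set V // DigConvex G S}

/-- A cyclic binary string `s : ZMod n → {0,1}` has all (maximal cyclic) blocks of
length at least `k`: whenever `s i ≠ s (i+1)`, the `k` bits starting at `i+1` all
equal `s (i+1)`. -/
def BlocksAtLeast {n : ℕ} (k : ℕ) (s : ZMod n → Fin 2) : Prop :=
  ∀ i : ZMod n, s i ≠ s (i + 1) → ∀ t : ℕ, 1 ≤ t → t ≤ k → s (i + (t : ZMod n)) = s (i + 1)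

/-- `a k n = |B_{k,n}|`: the number of cyclic binary strings of length `n` all of
whose blocks have length at least `k`. -/
noncomputable def numCyclicStrings (k n : ℕ) : ℕ :=
  Nat.card {s : ZMod n → Fin 2 // BlocksAtLeast k s}


open Finset

/-- cyclic gap condition: all elements below `m`, pairwise gaps (both ways around
the cycle `ZMod m`) at least `k`. -/
def gapOK (k m : ℕ) (D : Finset ℕ) : Prop :=
  ∀ a ∈ D, ∀ b ∈ D, a ≤ b → b < m ∧ (a = b ∨ a + k ≤ b) ∧ b + k ≤ a + m

instance gapOK.dec (k m : ℕ) : DecidablePred (gapOK k m) := fun _ => by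
  unfold gapOK; infer_instance

def gapSets (k m : ℕ) : Finset (Finset ℕ) := ((Finset.range m).powerset).filter (gapOK k m)

lemma mem_gapSets {k m : ℕ} {D : Finset ℕ} : D ∈ gapSets k m ↔ gapOK k m D := by
  constructor
  · intro h; exact (mem_filter.mp h).2
  · intro h
    refine mem_filter.mpr ⟨mem_powerset.mpr (fun b hb => mem_range.mpr (h b hb b hb le_rfl).1), h⟩

/-- number of gap sets whose cardinality satisfies `P`. -/
def cnt (k : ℕ) (P : ℕ → Bool) (m : ℕ) : ℕ :=
  ((gapSets k m).filter (fun D => P D.card = true)).card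

/-- "case II" condition for the bijection: the maximum is `m-1`, or the wrap gap
is exactly `k`. -/
def caseII (k m : ℕ) (D : Finset ℕ) : Prop :=
  (m - 1) ∈ D ∨ ∃ a ∈ D, ∃ b ∈ D, b + k = a + m

instance caseII.dec (k m : ℕ) : DecidablePred (caseII k m) := fun _ => by
  unfold caseII; infer_instance

/-- the distinguished element for the bijection. -/
def pick (k m : ℕ) (D : Finset ℕ) : ℕ := min (m - 1) (m - k + (WithTop.untopD (k - 1) D.min))

lemma min_unbot_eq {D : Finset ℕ} {a c : ℕ} (ha : a ∈ D) (h : ∀ b ∈ D, a ≤ b) :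
    WithTop.untopD c D.min = a := by
  have h1 : D.min = (a : WithBot ℕ) := le_antisymm (Finset.min_le ha) (Finset.le_min (by
    intro b hb; exact WithTop.coe_le_coe.mpr (h b hb)))
  rw [h1]; rfl

lemma pick_spec {k m : ℕ} (hk : 2 ≤ k) (hm : k + 3 ≤ m) {D : Finset ℕ}
    (hg : gapOK k m D) (hc : caseII k m D) :
    pick k m D ∈ D ∧ ∀ b ∈ D, b ≤ pick k m D := by
  -- D is nonempty
  have hne : D.Nonempty := by
    rcases hc with h | ⟨a, ha, _⟩
    · exact ⟨_, h⟩
    · exact ⟨a, ha⟩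
  set a := D.min' hne with ha_def
  have haD : a ∈ D := D.min'_mem hne
  have hmin : ∀ b ∈ D, a ≤ b := fun b hb => D.min'_le b hb
  have hub : WithTop.untopD (k-1) D.min = a := min_unbot_eq haD hmin
  rcases hc with h | ⟨a0, ha0, b0, hb0, heq⟩
  · -- m - 1 ∈ D
    have hw := hg a haD (m-1) h (by
      have := (hg a haD a haD le_rfl).1; omega)
    have hp : pick k m D = m - 1 := by
      unfold pick; rw [hub]; omega
    rw [hp]
    exact ⟨h, fun b hb => by have := (hg b hb b hb le_rfl).1; omega⟩
  · -- wrap gap exactly k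
    have hb0lt : b0 < m := (hg b0 hb0 b0 hb0 le_rfl).1
    have ha0lt : a0 < m := (hg a0 ha0 a0 ha0 le_rfl).1
    have hkm : k ≤ m := by have := (hg a0 ha0 a0 ha0 le_rfl).2.2; omega
    have hab : a0 ≤ b0 := by
      by_contra hlt
      have := (hg b0 hb0 a0 ha0 (by omega)).2.2
      omega
    -- b0 is the max
    have hmax : ∀ b ∈ D, b ≤ b0 := by
      intro b hb
      by_contra hgt
      have := (hg a0 ha0 b hb (by omega)).2.2
      omega
    -- a0 is the min
    have hmina : a = a0 := by
      have h1 : a ≤ a0 := hmin a0 ha0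
      by_contra hne'
      have := (hg a haD b0 hb0 (le_trans (hmin a0 ha0) hab)).2.2
      omega
    have hp : pick k m D = b0 := by
      unfold pick; rw [hub]; omega
    rw [hp]
    exact ⟨hb0, hmax⟩

lemma ins_spec {k m : ℕ} (hk : 2 ≤ k) (hm : k + 3 ≤ m) {D : Finset ℕ}
    (hg : gapOK k (m-k) D) :
    pick k m D ∉ D ∧ m - k ≤ pick k m D ∧ pick k m D ≤ m - 1 ∧
      gapOK k m (insert (pick k m D) D) ∧ caseII k m (insert (pick k m D) D) := by
  have hbound : ∀ x ∈ D, x < m - k := fun x hx => (hg x hx x hx le_rfl).1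
  by_cases hne : D.Nonempty
  · set a := D.min' hne with ha_def
    have haD : a ∈ D := D.min'_mem hne
    have hmina : ∀ b ∈ D, a ≤ b := fun b hb => D.min'_le b hb
    have hub : WithTop.untopD (k-1) D.min = a := min_unbot_eq haD hmina
    have hp : pick k m D = min (m-1) (m - k + a) := by unfold pick; rw [hub]
    set p := pick k m D with hp_def
    have hpk : m - k ≤ p ∧ p ≤ m - 1 := by omega
    have hpnot : p ∉ D := fun h => by have := hbound p h; omega
    have hwrapa : ∀ x ∈ D, x + k ≤ a + (m - k) := fun x hx => (hg a haD x hx (hmina x hx)).2.2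
    refine ⟨hpnot, hpk.1, hpk.2, ?_, ?_⟩
    · intro x hx y hy hxy
      rcases Finset.mem_insert.mp hx with hxp | hxD <;>
        rcases Finset.mem_insert.mp hy with hyp | hyD
      · subst hxp; subst hyp; refine ⟨by omega, Or.inl rfl, by omega⟩
      · exfalso; have := hbound y hyD; omega
      · subst hyp
        have h1 := hwrapa x hxD
        have h2 := hbound x hxD
        have h3 := hmina x hxD
        refine ⟨by omega, Or.inr (by omega), by omega⟩
      · obtain ⟨h1, h2, h3⟩ := hg x hxD y hyD hxy
        exact ⟨by omega, h2, by omega⟩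
    · by_cases hcase : m - k + a ≤ m - 1
      · right
        exact ⟨a, Finset.mem_insert_of_mem haD, p, Finset.mem_insert_self _ _, by omega⟩
      · left
        have : p = m - 1 := by omega
        rw [← this]; exact Finset.mem_insert_self _ _
  · rw [Finset.not_nonempty_iff_eq_empty] at hne
    subst hne
    have hp : pick k m (∅ : Finset ℕ) = m - 1 := by
      unfold pick; rw [Finset.min_empty]
      show min (m-1) (m - k + (k-1)) = m - 1
      omega
    rw [hp]
    refine ⟨by simp, by omega, by omega, ?_, Or.inl (Finset.mem_insert_self _ _)⟩
    intro x hx y hy hxy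
    simp only [Finset.mem_insert, Finset.notMem_empty, or_false] at hx hy
    subst hx; subst hy
    exact ⟨by omega, Or.inl rfl, by omega⟩

lemma pick_dich {k m : ℕ} (hk : 2 ≤ k) (hm : k + 3 ≤ m) {D : Finset ℕ}
    (hg : gapOK k m D) (hc : caseII k m D) (hne : D.Nonempty) :
    pick k m D = m - 1 ∨ pick k m D + k = D.min' hne + m := by
  obtain ⟨hdD, hdmax⟩ := pick_spec hk hm hg hc
  set d := pick k m D with hd_def
  set a := D.min' hne with ha_def
  have haD : a ∈ D := D.min'_mem hne
  have hmina : ∀ b ∈ D, a ≤ b := fun b hb => D.min'_le b hb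
  rcases hc with h | ⟨x, hx, y, hy, hxy⟩
  · left
    have := (hg (m-1) h (m-1) h le_rfl).1
    have := hdmax (m-1) h
    have := (hg d hdD d hdD le_rfl).1
    omega
  · right
    rcases le_total x y with hle | hle
    · have h3 := (hg x hx y hy hle).2.2
      have h4 := hdmax y hy
      have h5 := hmina x hx
      have h6 := (hg x hx d hdD (hdmax x hx)).2.2
      have h7 := (hg a haD d hdD (hmina d hdD)).2.2
      omega
    · have h1 := (hg y hy x hx hle).2.2
      have h2 := (hg x hx x hx le_rfl).1
      omega

lemma cnt_rec (k : ℕ) (hk : 2 ≤ k) (P : ℕ → Bool) (m : ℕ) (hm : k + 3 ≤ m) :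
    cnt k P m = cnt k P (m-1) + cnt k (fun c => P (c+1)) (m-k) := by
  classical
  set S := (gapSets k m).filter (fun D => P D.card = true) with hS
  have hsplit : cnt k P m
      = (S.filter (fun D => ¬ caseII k m D)).card + (S.filter (caseII k m)).card := by
    unfold cnt; rw [← hS, add_comm]
    exact (Finset.card_filter_add_card_filter_not (s := S) (caseII k m)).symm
  have hA : S.filter (fun D => ¬ caseII k m D)
      = (gapSets k (m-1)).filter (fun D => P D.card = true) := by
    ext D
    simp only [hS, mem_filter, filter_filter, mem_gapSets, and_assoc]
    constructor
    · rintro ⟨hg, hP, hnc⟩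
      refine ⟨?_, hP⟩
      intro x hx y hy hxy
      obtain ⟨h1, h2, h3⟩ := hg x hx y hy hxy
      have hy1 : y ≠ m - 1 := fun h => hnc (Or.inl (h ▸ hy))
      have h3' : y + k ≠ x + m := fun h => hnc (Or.inr ⟨x, hx, y, hy, h⟩)
      exact ⟨by omega, h2, by omega⟩
    · rintro ⟨hg, hP⟩
      have hg' : gapOK k m D := by
        intro x hx y hy hxy
        obtain ⟨h1, h2, h3⟩ := hg x hx y hy hxy
        exact ⟨by omega, h2, by omega⟩
      refine ⟨hg', hP, ?_⟩
      rintro (h | ⟨x, hx, y, hy, hxyk⟩)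
      · have := (hg (m-1) h (m-1) h le_rfl).1; omega
      · rcases le_total x y with hle | hle
        · have := (hg x hx y hy hle).2.2; omega
        · have h1 := (hg y hy x hx hle).2.2
          have h2 := (hg x hx x hx le_rfl).1
          omega
  have hB : (S.filter (caseII k m)).card
      = ((gapSets k (m-k)).filter (fun D => P (D.card + 1) = true)).card := by
    apply Finset.card_nbij' (fun D => D.erase (pick k m D)) (fun D => insert (pick k m D) D)
    · -- forward
      intro D hD
      simp only [Finset.mem_coe, hS, mem_filter, filter_filter, mem_gapSets, and_assoc] at hD ⊢
      obtain ⟨hg, hP, hc⟩ := hD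
      obtain ⟨hdD, hdmax⟩ := pick_spec hk hm hg hc
      set d := pick k m D with hd_def
      have hdlt : d < m := (hg d hdD d hdD le_rfl).1
      have hne : D.Nonempty := ⟨d, hdD⟩
      have hdich := pick_dich hk hm hg hc hne
      rw [← hd_def] at hdich
      set a := D.min' hne with ha_def
      have haD : a ∈ D := D.min'_mem hne
      have hmina : ∀ b ∈ D, a ≤ b := fun b hb => D.min'_le b hb
      have hwrap : d + k ≤ a + m := (hg a haD d hdD (hmina d hdD)).2.2
      constructor
      · intro x hx y hy hxy
        have hxD := Finset.mem_of_mem_erase hx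
        have hyD := Finset.mem_of_mem_erase hy
        have hyd := Finset.ne_of_mem_erase hy
        obtain ⟨h1, h2, h3⟩ := hg x hxD y hyD hxy
        have hyk : y + k ≤ d := by
          rcases (hg y hyD d hdD (hdmax y hyD)).2.1 with h | h
          · exact absurd h hyd
          · exact h
        have hax : a ≤ x := hmina x hxD
        refine ⟨by omega, h2, ?_⟩
        rcases hdich with h | h <;> omega
      · rw [Finset.card_erase_of_mem hdD]
        have hcp : 1 ≤ D.card := Finset.card_pos.mpr hne
        have : D.card - 1 + 1 = D.card := by omega
        rw [this]; exact hP
    · -- backward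
      intro D hD
      simp only [Finset.mem_coe, mem_filter, mem_gapSets] at hD
      obtain ⟨hg, hP⟩ := hD
      obtain ⟨hpnot, _, _, hgok, hcase⟩ := ins_spec hk hm hg
      simp only [Finset.mem_coe, hS, mem_filter, filter_filter, mem_gapSets, and_assoc]
      refine ⟨hgok, ?_, hcase⟩
      rw [Finset.card_insert_of_notMem hpnot]; exact hP
    · -- left inverse
      intro D hD
      simp only [Finset.mem_coe, hS, mem_filter, filter_filter, mem_gapSets, and_assoc] at hD
      obtain ⟨hg, hP, hc⟩ := hD
      obtain ⟨hdD, hdmax⟩ := pick_spec hk hm hg hc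
      set d := pick k m D with hd_def
      have hne : D.Nonempty := ⟨d, hdD⟩
      have hdich := pick_dich hk hm hg hc hne
      rw [← hd_def] at hdich
      set a := D.min' hne with ha_def
      have haD : a ∈ D := D.min'_mem hne
      have hmina : ∀ b ∈ D, a ≤ b := fun b hb => D.min'_le b hb
      have hub : WithTop.untopD (k-1) D.min = a := min_unbot_eq haD hmina
      have hdlt : d < m := (hg d hdD d hdD le_rfl).1
      have hkm : k ≤ m := by have := (hg d hdD d hdD le_rfl).2.2; omega
      have hwrap : d + k ≤ a + m := (hg a haD d hdD (hmina d hdD)).2.2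
      have hpd : pick k m D = min (m-1) (m - k + a) := by unfold pick; rw [hub]
      have key : pick k m (D.erase d) = d := by
        by_cases hne' : (D.erase d).Nonempty
        · obtain ⟨x, hx⟩ := hne'
          have hxD := Finset.mem_of_mem_erase hx
          have hxd := Finset.ne_of_mem_erase hx
          have haltd : a < d := by
            have h1 := hmina x hxD
            have h2 := hdmax x hxD
            rcases eq_or_lt_of_le (hmina d hdD) with h | h
            · exfalso; exact hxd (le_antisymm h2 (h ▸ h1))
            · exact h
          have haE : a ∈ D.erase d := Finset.mem_erase.mpr ⟨by omega, haD⟩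
          have hminaE : ∀ b ∈ D.erase d, a ≤ b := fun b hb =>
            hmina b (Finset.mem_of_mem_erase hb)
          have hubE : WithTop.untopD (k-1) (D.erase d).min = a := min_unbot_eq haE hminaE
          have h7 : d = (m-1) ⊓ (m - k + a) := hd_def.trans hpd
          unfold pick; rw [hubE]
          omega
        · rw [Finset.not_nonempty_iff_eq_empty] at hne'
          have had : a = d := by
            by_contra hne''
            exact absurd (Finset.mem_erase.mpr ⟨hne'', haD⟩)
              (by rw [hne']; exact Finset.notMem_empty a)
          have hdm1 : d = m - 1 := by
            rcases hdich with h | h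
            · exact h
            · omega
          rw [hne']
          unfold pick; rw [Finset.min_empty]
          show min (m-1) (m - k + (k-1)) = d
          omega
      show insert (pick k m (D.erase d)) (D.erase d) = D
      rw [key, Finset.insert_erase hdD]
    · -- right inverse
      intro D hD
      simp only [Finset.mem_coe, mem_filter, mem_gapSets] at hD
      obtain ⟨hg, hP⟩ := hD
      obtain ⟨hpnot, hpk1, hpk2, hgok, hcase⟩ := ins_spec hk hm hg
      set p := pick k m D with hp_def
      have hbound : ∀ x ∈ D, x < m - k := fun x hx => (hg x hx x hx le_rfl).1
      obtain ⟨hqmem, hqmax⟩ := pick_spec hk hm hgok hcase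
      have hq : pick k m (insert p D) = p := by
        apply le_antisymm
        · rcases Finset.mem_insert.mp hqmem with h | h
          · omega
          · have := hbound _ h; omega
        · exact hqmax p (Finset.mem_insert_self _ _)
      show (insert p D).erase (pick k m (insert p D)) = D
      rw [hq, Finset.erase_insert hpnot]
  rw [hsplit, hA, hB]
  rfl

section Strings

open Finset

-- Fin 2 facts
lemma f2a : ∀ x : Fin 2, x + 1 + 1 = x := by decide
lemma f2b : ∀ x : Fin 2, ¬ (x + 1 = x) := by decide
lemma f2c : ∀ x y : Fin 2, x ≠ y ↔ y = x + 1 := by decide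

/-- change set of a cyclic string, as a set of naturals below `n`. -/
def chg (n : ℕ) (s : ZMod n → Fin 2) : Finset ℕ :=
  (Finset.range n).filter (fun i => ¬ (s (i : ZMod n) = s ((i : ZMod n) + 1)))

/-- prefix count. -/
def pc (D : Finset ℕ) (i : ℕ) : ℕ := (D.filter (fun y => y < i)).card

/-- rebuild a string from its initial bit and change set. -/
def bld (n : ℕ) (b : Fin 2) (D : Finset ℕ) : ZMod n → Fin 2 :=
  fun x => if pc D (ZMod.val x) % 2 = 0 then b else b + 1

lemma pc_zero (D : Finset ℕ) : pc D 0 = 0 := by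
  unfold pc
  rw [Finset.filter_false_of_mem (fun x _ => by omega), Finset.card_empty]

lemma pc_succ (D : Finset ℕ) (i : ℕ) :
    pc D (i+1) = pc D i + (if i ∈ D then 1 else 0) := by
  unfold pc
  by_cases h : i ∈ D
  · rw [if_pos h]
    have : D.filter (fun y => y < i + 1) = insert i (D.filter (fun y => y < i)) := by
      ext x
      simp only [Finset.mem_filter, Finset.mem_insert]
      constructor
      · rintro ⟨hx, hlt⟩
        rcases Nat.lt_succ_iff_lt_or_eq.mp hlt with h' | h'
        · exact Or.inr ⟨hx, h'⟩
        · exact Or.inl h'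
      · rintro (rfl | ⟨hx, hlt⟩)
        · exact ⟨h, by omega⟩
        · exact ⟨hx, by omega⟩
    rw [this, Finset.card_insert_of_notMem (by simp)]
  · rw [if_neg h]
    have : D.filter (fun y => y < i + 1) = D.filter (fun y => y < i) := by
      ext x
      simp only [Finset.mem_filter]
      constructor
      · rintro ⟨hx, hlt⟩
        refine ⟨hx, ?_⟩
        rcases Nat.lt_succ_iff_lt_or_eq.mp hlt with h' | h'
        · exact h'
        · exact absurd (h' ▸ hx) h
      · rintro ⟨hx, hlt⟩; exact ⟨hx, by omega⟩
    rw [this, Nat.add_zero]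

lemma pc_all {n : ℕ} (D : Finset ℕ) (hD : D ⊆ Finset.range n) : pc D n = D.card := by
  unfold pc
  congr 1
  apply Finset.filter_true_of_mem
  intro x hx
  exact Finset.mem_range.mp (hD hx)

variable {n : ℕ} [NeZero n]

lemma walk (s : ZMod n → Fin 2) :
    ∀ i, i ≤ n → s ((i : ℕ) : ZMod n)
      = (if pc (chg n s) i % 2 = 0 then s 0 else s 0 + 1) := by
  intro i
  induction i with
  | zero => intro _; rw [pc_zero]; simp
  | succ i ih =>
    intro hi
    have hi' : i < n := by omega
    have hcast : ((i+1 : ℕ) : ZMod n) = ((i : ℕ) : ZMod n) + 1 := by push_cast; ring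
    have hmem : i ∈ chg n s ↔ ¬ (s ((i : ℕ) : ZMod n) = s (((i : ℕ) : ZMod n) + 1)) := by
      unfold chg
      simp [Finset.mem_filter, Finset.mem_range, hi']
    rw [hcast, pc_succ]
    by_cases h : i ∈ chg n s
    · have hne := hmem.mp h
      have hstep : s (((i : ℕ) : ZMod n) + 1) = s ((i : ℕ) : ZMod n) + 1 :=
        (f2c _ _).mp hne
      rw [hstep, ih (by omega), if_pos h]
      by_cases hp : pc (chg n s) i % 2 = 0
      · rw [if_pos hp, if_neg (by omega)]
      · rw [if_neg hp, if_pos (by omega), f2a]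
    · have heq : s (((i : ℕ) : ZMod n) + 1) = s ((i : ℕ) : ZMod n) := by
        by_contra hne
        exact h (hmem.mpr (fun hcontra => hne (hcontra.symm)))
      rw [heq, ih (by omega), if_neg h]
      simp

lemma chg_subset (s : ZMod n → Fin 2) : chg n s ⊆ Finset.range n :=
  Finset.filter_subset _ _

lemma chg_even (s : ZMod n → Fin 2) : (chg n s).card % 2 = 0 := by
  have hw := walk s n le_rfl
  rw [ZMod.natCast_self, pc_all _ (chg_subset s)] at hw
  by_cases hp : (chg n s).card % 2 = 0
  · exact hp
  · rw [if_neg hp] at hw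
    exact absurd hw.symm (f2b (s 0))

lemma bld_eq (s : ZMod n → Fin 2) : bld n (s 0) (chg n s) = s := by
  funext x
  have hv : ((ZMod.val x : ℕ) : ZMod n) = x := ZMod.natCast_rightInverse x
  have hw := walk s (ZMod.val x) (le_of_lt (ZMod.val_lt x))
  rw [hv] at hw
  unfold bld
  rw [← hw]

lemma bld_zero (b : Fin 2) (D : Finset ℕ) : bld n b D 0 = b := by
  unfold bld
  rw [ZMod.val_zero, pc_zero]
  simp

lemma bld_ne_iff (b : Fin 2) (D : Finset ℕ) (p q : ℕ) :
    ((if p % 2 = 0 then b else b + 1) ≠ (if q % 2 = 0 then b else b + 1)) ↔ p % 2 ≠ q % 2 := by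
  by_cases hp : p % 2 = 0 <;> by_cases hq : q % 2 = 0 <;>
    simp [hp, hq] <;> first
      | (intro h; exact f2b b h.symm)
      | (constructor; · intro h h'; omega; · intro h; exact fun h' => f2b b h')
      | omega

lemma chg_bld (b : Fin 2) (D : Finset ℕ) (hD : D ⊆ Finset.range n)
    (hev : D.card % 2 = 0) : chg n (bld n b D) = D := by
  have hn : 1 ≤ n := Nat.one_le_iff_ne_zero.mpr (NeZero.ne n)
  ext j
  unfold chg
  simp only [Finset.mem_filter, Finset.mem_range]
  constructor
  · rintro ⟨hj, hne⟩
    by_cases hlast : j + 1 < n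
    · -- non-wrapping step
      have h1 : ZMod.val ((j : ℕ) : ZMod n) = j := ZMod.val_cast_of_lt hj
      have hcast : ((j : ℕ) : ZMod n) + 1 = ((j+1 : ℕ) : ZMod n) := by push_cast; ring
      have h2 : ZMod.val (((j : ℕ) : ZMod n) + 1) = j + 1 := by
        rw [hcast]; exact ZMod.val_cast_of_lt hlast
      unfold bld at hne
      rw [h1, h2, pc_succ] at hne
      have := (bld_ne_iff b D _ _).mp hne
      by_contra hjD
      rw [if_neg hjD] at this
      omega
    · -- j = n - 1, wrap around
      have hj1 : j = n - 1 := by omega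
      have h1 : ZMod.val ((j : ℕ) : ZMod n) = j := ZMod.val_cast_of_lt hj
      have hcast : ((j : ℕ) : ZMod n) + 1 = 0 := by
        have : ((j+1 : ℕ) : ZMod n) = ((j : ℕ) : ZMod n) + 1 := by push_cast; ring
        rw [← this, show j + 1 = n by omega, ZMod.natCast_self]
      unfold bld at hne
      rw [h1, hcast, ZMod.val_zero, pc_zero] at hne
      have hpar := (bld_ne_iff b D _ _).mp hne
      by_contra hjD
      -- then D.filter (< j) = D, so pc D j = D.card which is even: contradiction
      have : D.filter (fun y => y < j) = D := by
        apply Finset.filter_true_of_mem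
        intro x hx
        have hxn := Finset.mem_range.mp (hD hx)
        have : x ≠ j := fun h => hjD (h ▸ hx)
        omega
      unfold pc at hpar
      rw [this] at hpar
      omega
  · intro hjD
    have hj : j < n := Finset.mem_range.mp (hD hjD)
    refine ⟨hj, ?_⟩
    by_cases hlast : j + 1 < n
    · have h1 : ZMod.val ((j : ℕ) : ZMod n) = j := ZMod.val_cast_of_lt hj
      have hcast : ((j : ℕ) : ZMod n) + 1 = ((j+1 : ℕ) : ZMod n) := by push_cast; ring
      have h2 : ZMod.val (((j : ℕ) : ZMod n) + 1) = j + 1 := by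
        rw [hcast]; exact ZMod.val_cast_of_lt hlast
      unfold bld
      rw [h1, h2, pc_succ, if_pos hjD]
      apply (bld_ne_iff b D _ _).mpr
      omega
    · have hj1 : j = n - 1 := by omega
      have h1 : ZMod.val ((j : ℕ) : ZMod n) = j := ZMod.val_cast_of_lt hj
      have hcast : ((j : ℕ) : ZMod n) + 1 = 0 := by
        have : ((j+1 : ℕ) : ZMod n) = ((j : ℕ) : ZMod n) + 1 := by push_cast; ring
        rw [← this, show j + 1 = n by omega, ZMod.natCast_self]
      unfold bld
      rw [h1, hcast, ZMod.val_zero, pc_zero]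
      apply (bld_ne_iff b D _ _).mpr
      have : D.filter (fun y => y < j) = D.erase j := by
        ext x
        simp only [Finset.mem_filter, Finset.mem_erase]
        constructor
        · rintro ⟨hx, hlt⟩; exact ⟨by omega, hx⟩
        · rintro ⟨hne, hx⟩
          have := Finset.mem_range.mp (hD hx)
          exact ⟨hx, by omega⟩
      unfold pc
      rw [this, Finset.card_erase_of_mem hjD]
      have hpos : 1 ≤ D.card := Finset.card_pos.mpr ⟨j, hjD⟩
      omega

end Strings

section Blocks

open Finset

variable {n k : ℕ} [NeZero n]

lemma blocks_iff_gap (hk : 2 ≤ k) (hkn : k ≤ n) (s : ZMod n → Fin 2) :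
    BlocksAtLeast k s ↔ gapOK k n (chg n s) := by
  have hmem : ∀ j : ℕ, j ∈ chg n s ↔ (j < n ∧ s ((j:ℕ) : ZMod n) ≠ s (((j:ℕ) : ZMod n) + 1)) := by
    intro j; unfold chg
    simp [Finset.mem_filter, Finset.mem_range]
  constructor
  · intro hB
    -- window form: no two changes at cyclic distance < k
    have hW : ∀ i : ZMod n, s i ≠ s (i + 1) → ∀ t : ℕ, 1 ≤ t → t < k →
        s (i + (t:ℕ)) = s ((i + (t:ℕ)) + 1) := by
      intro i hi t h1 h2
      have e1 := hB i hi t h1 (by omega)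
      have e2 := hB i hi (t+1) (by omega) (by omega)
      have : i + ((t+1 : ℕ) : ZMod n) = (i + (t:ℕ)) + 1 := by push_cast; ring
      rw [this] at e2
      rw [e1, e2]
    intro a ha b hb hab
    obtain ⟨han, hch_a⟩ := (hmem a).mp ha
    obtain ⟨hbn, hch_b⟩ := (hmem b).mp hb
    refine ⟨hbn, ?_, ?_⟩
    · by_contra hcon
      push_neg at hcon
      obtain ⟨hne, hlt⟩ := hcon
      have h1 : 1 ≤ b - a := by omega
      have h2 : b - a < k := by omega
      have := hW ((a:ℕ) : ZMod n) hch_a (b - a) h1 h2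
      have hcast : ((a:ℕ) : ZMod n) + ((b - a : ℕ) : ZMod n) = ((b:ℕ) : ZMod n) := by
        rw [← Nat.cast_add]
        congr 1
        omega
      rw [hcast] at this
      exact hch_b this
    · rcases eq_or_lt_of_le hab with rfl | hlt
      · omega
      · by_contra hcon
        push_neg at hcon
        have h1 : 1 ≤ a + n - b := by omega
        have h2 : a + n - b < k := by omega
        have := hW ((b:ℕ) : ZMod n) hch_b (a + n - b) h1 h2
        have hcast : ((b:ℕ) : ZMod n) + ((a + n - b : ℕ) : ZMod n) = ((a:ℕ) : ZMod n) := by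
          rw [← Nat.cast_add]
          have : b + (a + n - b) = a + n := by omega
          rw [this]
          push_cast [ZMod.natCast_self]
          ring
        rw [hcast] at this
        exact hch_a this
  · intro hg
    intro i hi t ht1 htk
    -- prove by induction on t
    induction t with
    | zero => omega
    | succ t ih =>
      rcases Nat.eq_or_lt_of_le ht1 with h1 | h1
      · -- t + 1 = 1
        have : t = 0 := by omega
        subst this
        norm_num
      · -- t ≥ 1 : s (i + (t+1)) = s (i + t) = s (i+1)
        have ht : 1 ≤ t := by omega
        have ihv := ih (by omega) (by omega)
        have hnoch : s (i + (t:ℕ)) = s ((i + (t:ℕ)) + 1) := by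
          by_contra hch
          -- two changes at distance t with 1 ≤ t < k : contradiction with gapOK
          set a := ZMod.val i with ha_def
          have han : a < n := ZMod.val_lt i
          have hac : ((a:ℕ) : ZMod n) = i := ZMod.natCast_rightInverse i
          have haD : a ∈ chg n s := (hmem a).mpr ⟨han, by rw [hac]; exact hi⟩
          set j := (a + t) % n with hj_def
          have hjn : j < n := Nat.mod_lt _ (by omega)
          have htn : t < n := by omega
          have hjc : ((j:ℕ) : ZMod n) = i + (t:ℕ) := by
            rw [hj_def]
            rw [ZMod.natCast_mod]
            push_cast
            rw [hac]
          have hjD : j ∈ chg n s := (hmem j).mpr ⟨hjn, by rw [hjc]; exact hch⟩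
          by_cases hcase : a + t < n
          · have hje : j = a + t := by rw [hj_def]; exact Nat.mod_eq_of_lt hcase
            rcases (hg a haD j hjD (by omega)).2.1 with h | h <;> omega
          · have hje : j = a + t - n := by
              rw [hj_def]
              have : a + t - n < n := by omega
              have heq : a + t = (a + t - n) + n := by omega
              rw [heq, Nat.add_mod_right, Nat.mod_eq_of_lt this]
              omega
            have := (hg j hjD a haD (by omega)).2.2
            omega
        have hcast : i + ((t+1 : ℕ) : ZMod n) = (i + (t:ℕ)) + 1 := by push_cast; ring
        rw [hcast, ← hnoch]
        exact ihv

end Blocks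

section Count

open Finset

lemma count_eq {k n : ℕ} (hk : 2 ≤ k) (hkn : k ≤ n) :
    numCyclicStrings k n = 2 * cnt k (fun c => decide (c % 2 = 0)) n := by
  haveI : NeZero n := ⟨by omega⟩
  set F := (gapSets k n).filter (fun D => decide (D.card % 2 = 0) = true) with hF
  have e : {s : ZMod n → Fin 2 // BlocksAtLeast k s} ≃ (Fin 2 × {D // D ∈ F}) := by
    refine ⟨fun p => (p.1 0, ⟨chg n p.1, ?_⟩),
            fun q => ⟨bld n q.1 q.2.1, ?_⟩, ?_, ?_⟩
    · rw [hF, mem_filter, mem_gapSets]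
      refine ⟨(blocks_iff_gap hk hkn p.1).mp p.2, by simp [chg_even p.1]⟩
    · -- BlocksAtLeast for rebuilt string
      obtain ⟨hg', hev⟩ := Finset.mem_filter.mp q.2.2
      have hg := mem_gapSets.mp hg'
      have hev' : (q.2.1).card % 2 = 0 := by simpa using hev
      have hsub : q.2.1 ⊆ Finset.range n := fun x hx => mem_range.mpr (hg x hx x hx le_rfl).1
      have hchg : chg n (bld n q.1 q.2.1) = q.2.1 := chg_bld q.1 q.2.1 hsub hev'
      apply (blocks_iff_gap hk hkn _).mpr
      rw [hchg]; exact hg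
    · rintro ⟨s, hs⟩
      exact Subtype.ext (bld_eq s)
    · rintro ⟨b, ⟨D, hD⟩⟩
      obtain ⟨hg', hev⟩ := Finset.mem_filter.mp hD
      have hg := mem_gapSets.mp hg'
      have hev' : D.card % 2 = 0 := by simpa using hev
      have hsub : D ⊆ Finset.range n := fun x hx => mem_range.mpr (hg x hx x hx le_rfl).1
      have : chg n (bld n b D) = D := chg_bld b D hsub hev'
      refine Prod.ext ?_ ?_
      · exact bld_zero b D
      · exact Subtype.ext this
  rw [numCyclicStrings, Nat.card_congr e, Nat.card_prod]
  have h1 : Nat.card (Fin 2) = 2 := by simp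
  have h2 : Nat.card {D // D ∈ F} = F.card := Nat.card_eq_finsetCard F
  rw [h1, h2]
  rfl

lemma count_small {k n : ℕ} (hk : 2 ≤ k) (h1 : 1 ≤ n) (hnk : n ≤ k) :
    numCyclicStrings k n = 2 * cnt k (fun c => decide (c % 2 = 0)) n := by
  haveI : NeZero n := ⟨by omega⟩
  -- every valid string is constant
  have hconst : ∀ s : ZMod n → Fin 2, BlocksAtLeast k s → ∀ x, s x = s 0 := by
    intro s hs
    have hnoch : ∀ i : ZMod n, s i = s (i + 1) := by
      intro i
      by_contra hch
      have := hs i hch n h1 hnk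
      rw [ZMod.natCast_self, add_zero] at this
      exact hch this
    have key : ∀ j : ℕ, j ≤ n → s ((j : ℕ) : ZMod n) = s 0 := by
      intro j
      induction j with
      | zero => intro _; norm_num
      | succ j ih =>
        intro hj
        have : ((j+1 : ℕ) : ZMod n) = ((j : ℕ) : ZMod n) + 1 := by push_cast; ring
        rw [this, ← hnoch]
        exact ih (by omega)
    intro x
    have := key (ZMod.val x) (le_of_lt (ZMod.val_lt x))
    rwa [ZMod.natCast_rightInverse x] at this
  have e : {s : ZMod n → Fin 2 // BlocksAtLeast k s} ≃ Fin 2 := by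
    refine ⟨fun p => p.1 0, fun b => ⟨fun _ => b, ?_⟩, ?_, fun b => rfl⟩
    · intro i hi; exact absurd rfl hi
    · rintro ⟨s, hs⟩
      exact Subtype.ext (funext (fun x => (hconst s hs x).symm))
  have hL : numCyclicStrings k n = 2 := by
    rw [numCyclicStrings, Nat.card_congr e]; simp
  -- only the empty set is a gap set with even cardinality
  have hR : (gapSets k n).filter (fun D => decide (D.card % 2 = 0) = true) = {∅} := by
    ext D
    simp only [mem_filter, mem_gapSets, Finset.mem_singleton]
    constructor
    · rintro ⟨hg, hev⟩
      by_contra hne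
      obtain ⟨a, ha⟩ := Finset.nonempty_iff_ne_empty.mpr hne
      have := (hg a ha a ha le_rfl).2.2
      -- needs k ≤ n contradiction when n < k... here n ≤ k and k ≤ n forced
      have h2 := (hg a ha a ha le_rfl).1
      -- wrap gives a + k ≤ a + n, i.e. k ≤ n, so k = n
      -- then D has one element with n ≥ k : but evenness rules out card 1?
      -- Need more care: k = n possible. Then singletons allowed but have odd card.
      -- D.card even and D nonempty means D.card ≥ 2 : two distinct elements
      have hcard : 2 ≤ D.card := by
        have hpos : 1 ≤ D.card := Finset.card_pos.mpr ⟨a, ha⟩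
        rcases Nat.lt_or_ge D.card 2 with h | h
        · interval_cases hc : D.card <;> simp_all <;> omega
        · exact h
      obtain ⟨x, hx, y, hy, hxy⟩ := Finset.one_lt_card.mp hcard
      rcases le_total x y with hle | hle
      · have h3 := (hg x hx y hy hle).2.1
        have h4 := (hg x hx y hy hle).2.2
        have h5 := (hg x hx x hx le_rfl).1
        rcases h3 with h | h <;> omega
      · have h3 := (hg y hy x hx hle).2.1
        have h4 := (hg y hy x hx hle).2.2
        have h5 := (hg y hy y hy le_rfl).1
        rcases h3 with h | h
        · exact hxy h.symm
        · omega
    · rintro rfl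
      exact ⟨fun a ha => absurd ha (Finset.notMem_empty a), by simp⟩
  rw [hL]
  unfold cnt
  rw [hR]
  simp

lemma count_all {k n : ℕ} (hk : 2 ≤ k) (h1 : 1 ≤ n) :
    numCyclicStrings k n = 2 * cnt k (fun c => decide (c % 2 = 0)) n := by
  rcases le_total k n with h | h
  · exact count_eq hk h
  · exact count_small hk h1 h

end Count

def Pe : ℕ → Bool := fun c => decide (c % 2 = 0)
def Po : ℕ → Bool := fun c => decide (c % 2 = 1)

lemma shift_e : (fun c => Pe (c+1)) = Po := by
  funext c
  exact decide_eq_decide.mpr (by omega)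

lemma shift_o : (fun c => Po (c+1)) = Pe := by
  funext c
  exact decide_eq_decide.mpr (by omega)

lemma count_all' {k n : ℕ} (hk : 2 ≤ k) (h1 : 1 ≤ n) :
    numCyclicStrings k n = 2 * cnt k Pe n :=
  count_all hk h1


/-- For `k ≥ 2` and `n ≥ 2k+3`, the number of cyclic binary strings of length `n`
all of whose blocks have length at least `k` satisfies
`a_k(n) = 2·a_k(n-1) - a_k(n-2) + a_k(n-2k)`. -/
theorem cyclic_strings_recurrence (k n : ℕ) (hk : 2 ≤ k) (hn : 2 * k + 3 ≤ n) :
    (numCyclicStrings k n : ℤ) =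
      2 * numCyclicStrings k (n - 1) - numCyclicStrings k (n - 2)
        + numCyclicStrings k (n - 2 * k) := by
  have e1 := cnt_rec k hk Pe n (by omega)
  have e2 := cnt_rec k hk Pe (n-1) (by omega)
  have e3 := cnt_rec k hk Po (n-k) (by omega)
  rw [shift_e] at e1 e2
  rw [shift_o] at e3
  rw [show n - 1 - 1 = n - 2 by omega, show n - 1 - k = n - k - 1 by omega] at e2
  rw [show n - k - 1 = n - k - 1 by omega, show n - k - k = n - 2*k by omega] at e3
  rw [count_all' hk (by omega : 1 ≤ n),
      count_all' hk (by omega : 1 ≤ n - 1),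
      count_all' hk (by omega : 1 ≤ n - 2),
      count_all' hk (by omega : 1 ≤ n - 2*k)]
  push_cast
  omega
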